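/- Let n ≥ 2 and consider the honest n-qubit protocol strategy: H_A = H_B = (ℂ²)^{⊗n}, ψ = |EPR⟩^{⊗n} ∈ H_A ⊗ H_B pairing Alice's qubit i with Bob's qubit i, (Z_i)_D = σz acting on qubit i, (X_i)_D = σx acting on qubit i for D ∈ {A,B}, and for i < j and b, c ∈ {0,1}, Π^{(i,b),(j,c)}_{x,y} defined as the product of the projection onto the x-eigenspace of M_b acting on qubit i and the projection onto the y-eigenspace of M_c acting on qubit j, where M_0 = H (the Hadamard matrix) and M_1 = −σx H σx. Then the acceptance probability of this strategy equals ω_opt = (1 + 2cos²(π/8))/3. -/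

import Mathlib

open scoped Matrix Kronecker ComplexConjugate

noncomputable section

abbrev Reg (n : ℕ) := (Fin n × Fin 2) → Fin 2

def cnorm {ι : Type*} [Fintype ι] (v : ι → ℂ) : ℝ :=
  Real.sqrt (∑ i, ‖v i‖ ^ 2)

def cinner {ι : Type*} [Fintype ι] (v w : ι → ℂ) : ℂ :=
  ∑ i, (starRingEnd ℂ) (v i) * w i

def IsReflection {ι : Type*} [Fintype ι] [DecidableEq ι] (M : Matrix ι ι ℂ) : Prop :=
  M.IsHermitian ∧ M * M = 1

def sx : Matrix (Fin 2) (Fin 2) ℂ := !![0, 1; 1, 0]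
def sy : Matrix (Fin 2) (Fin 2) ℂ := !![0, -Complex.I; Complex.I, 0]
def sz : Matrix (Fin 2) (Fin 2) ℂ := !![1, 0; 0, -1]

def onQubit {K : Type*} [Fintype K] [DecidableEq K] (k : K) (M : Matrix (Fin 2) (Fin 2) ℂ) :
    Matrix (K → Fin 2) (K → Fin 2) ℂ :=
  fun f g => if ∀ k', k' ≠ k → f k' = g k' then M (f k) (g k) else 0

def eprAmp : Fin 2 → Fin 2 → ℂ := fun a b => if a = b then ((Real.sqrt 2 : ℝ) : ℂ)⁻¹ else 0

def eprLocal (n : ℕ) : Reg n → ℂ := fun f => ∏ j : Fin n, eprAmp (f (j, 0)) (f (j, 1))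

def psiExt {dA dB : ℕ} (n : ℕ) (ψ : Fin dA × Fin dB → ℂ) :
    (Fin dA × Reg n) × (Fin dB × Reg n) → ℂ :=
  fun p => ψ (p.1.1, p.2.1) * eprLocal n p.1.2 * eprLocal n p.2.2

def NQubitHyp (n : ℕ) (ε : ℝ) {dA dB : ℕ}
    (XA ZA : Fin n → Matrix (Fin dA) (Fin dA) ℂ)
    (XB ZB : Fin n → Matrix (Fin dB) (Fin dB) ℂ)
    (ψ : Fin dA × Fin dB → ℂ) : Prop :=
  cnorm ψ = 1 ∧
  (∀ j, IsReflection (XA j) ∧ IsReflection (ZA j) ∧ IsReflection (XB j) ∧ IsReflection (ZB j)) ∧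
  (∀ j, XA j * ZA j + ZA j * XA j = 0) ∧
  (∀ j, XB j * ZB j + ZB j * XB j = 0) ∧
  (∀ P Q : Fin n → Matrix (Fin dA) (Fin dA) ℂ, (P = XA ∨ P = ZA) → (Q = XA ∨ Q = ZA) →
    ∀ i j : Fin n, i ≠ j →
    cnorm (((P i * Q j - Q j * P i) ⊗ₖ (1 : Matrix (Fin dB) (Fin dB) ℂ)).mulVec ψ) ≤ ε) ∧
  (∀ P Q : Fin n → Matrix (Fin dB) (Fin dB) ℂ, (P = XB ∨ P = ZB) → (Q = XB ∨ Q = ZB) →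
    ∀ i j : Fin n, i ≠ j →
    cnorm (((1 : Matrix (Fin dA) (Fin dA) ℂ) ⊗ₖ (P i * Q j - Q j * P i)).mulVec ψ) ≤ ε) ∧
  (∀ (P : Fin n → Matrix (Fin dA) (Fin dA) ℂ) (P' : Fin n → Matrix (Fin dB) (Fin dB) ℂ),
    ((P = XA ∧ P' = XB) ∨ (P = ZA ∧ P' = ZB)) →
    ∀ j, cnorm ((P j ⊗ₖ P' j).mulVec ψ - ψ) ≤ ε)


def sgn : Bool → ℂ := fun x => if x then 1 else -1

def omegaOpt : ℝ := (1 + 2 * Real.cos (Real.pi / 8) ^ 2) / 3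

/-- A two-outcome-pair projective measurement. -/
def ProjMeas {ι : Type*} [Fintype ι] [DecidableEq ι] (Pi : Bool → Bool → Matrix ι ι ℂ) : Prop :=
  (∀ x y, (Pi x y).IsHermitian ∧ Pi x y * Pi x y = Pi x y) ∧
  (∀ x y x' y', (x, y) ≠ (x', y') → Pi x y * Pi x' y' = 0) ∧
  (∑ x : Bool, ∑ y : Bool, Pi x y) = 1

/-- `R i b j c` is the marginal observable `R^{jc}_{ib}` obtained from the joint measurements. -/
def RChar {ι : Type*} [Fintype ι] [DecidableEq ι] {n : ℕ}
    (Pi : Fin n → Fin n → Bool → Bool → Bool → Bool → Matrix ι ι ℂ)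
    (R : Fin n → Bool → Fin n → Bool → Matrix ι ι ℂ) : Prop :=
  ∀ i j : Fin n, i < j → ∀ b c,
    R i b j c = (∑ x : Bool, ∑ y : Bool, sgn x • Pi i j b c x y) ∧
    R j c i b = (∑ x : Bool, ∑ y : Bool, sgn y • Pi i j b c x y)

/-- The acceptance probability ω = (ω₁ + ω₂ + ω₃)/3 of a strategy for the n-qubit protocol. -/
def accProb {ιA ιB : Type*} [Fintype ιA] [DecidableEq ιA] [Fintype ιB] [DecidableEq ιB] (n : ℕ)
    (XA ZA : Fin n → Matrix ιA ιA ℂ)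
    (XB ZB : Fin n → Matrix ιB ιB ℂ)
    (RA : Fin n → Bool → Fin n → Bool → Matrix ιA ιA ℂ)
    (RB : Fin n → Bool → Fin n → Bool → Matrix ιB ιB ℂ)
    (ψ : ιA × ιB → ℂ) : ℝ :=
  (1 / 3) * (
    (1 / (2 * (n : ℝ))) * ∑ i : Fin n, ∑ a : Bool,
      (1 + (cinner ψ (((if a then XA i else ZA i) ⊗ₖ
          (if a then XB i else ZB i)).mulVec ψ)).re) / 2
    + (1 / (8 * (n : ℝ) * ((n : ℝ) - 1))) * ∑ i : Fin n, ∑ j : Fin n,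
        (if i = j then 0 else ∑ a : Bool, ∑ b : Bool, ∑ c : Bool,
          (1 + (if a && b then -1 else 1) *
            (cinner ψ (((if a then XA i else ZA i) ⊗ₖ RB i b j c).mulVec ψ)).re) / 2)
    + (1 / (8 * (n : ℝ) * ((n : ℝ) - 1))) * ∑ i : Fin n, ∑ j : Fin n,
        (if i = j then 0 else ∑ a : Bool, ∑ b : Bool, ∑ c : Bool,
          (1 + (if a && b then -1 else 1) *
            (cinner ψ ((RA i b j c ⊗ₖ (if a then XB i else ZB i)).mulVec ψ)).re) / 2))

/-- Validity of a strategy for the n-qubit protocol. -/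
def StratValid {ιA ιB : Type*} [Fintype ιA] [DecidableEq ιA] [Fintype ιB] [DecidableEq ιB]
    (n : ℕ)
    (XA ZA : Fin n → Matrix ιA ιA ℂ)
    (XB ZB : Fin n → Matrix ιB ιB ℂ)
    (PiA : Fin n → Fin n → Bool → Bool → Bool → Bool → Matrix ιA ιA ℂ)
    (PiB : Fin n → Fin n → Bool → Bool → Bool → Bool → Matrix ιB ιB ℂ)
    (ψ : ιA × ιB → ℂ) : Prop :=
  cnorm ψ = 1 ∧
  (∀ i, IsReflection (XA i) ∧ IsReflection (ZA i) ∧ IsReflection (XB i) ∧ IsReflection (ZB i)) ∧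
  (∀ i j : Fin n, i < j → ∀ b c, ProjMeas (PiA i j b c)) ∧
  (∀ i j : Fin n, i < j → ∀ b c, ProjMeas (PiB i j b c))

/-- The Hadamard matrix. -/
def Had : Matrix (Fin 2) (Fin 2) ℂ := ((Real.sqrt 2 : ℝ) : ℂ)⁻¹ • !![1, 1; 1, -1]

/-- The measurement observable of the player who receives two tuples: M₀ = H, M₁ = -σx H σx. -/
def Mb : Bool → Matrix (Fin 2) (Fin 2) ℂ := fun b => if b then -(sx * Had * sx) else Had

/-- Projection onto the ±1 eigenspace of a single-qubit reflection. -/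
def eigProj (x : Bool) (M : Matrix (Fin 2) (Fin 2) ℂ) : Matrix (Fin 2) (Fin 2) ℂ :=
  (1 / 2 : ℂ) • ((1 : Matrix (Fin 2) (Fin 2) ℂ) + sgn x • M)

/-- n EPR pairs shared between Alice and Bob, pairing qubit i with qubit i. -/
def honestPsi (n : ℕ) : (Fin n → Fin 2) × (Fin n → Fin 2) → ℂ :=
  fun p => ∏ j : Fin n, eprAmp (p.1 j) (p.2 j)

/-- The honest joint measurement Π^{(i,b),(j,c)}_{x,y} (for i < j). -/
def honestPi (n : ℕ) (i j : Fin n) (b c x y : Bool) :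
    Matrix ((Fin n → Fin 2)) ((Fin n → Fin 2)) ℂ :=
  onQubit i (eigProj x (Mb b)) * onQubit j (eigProj y (Mb c))

/-- The marginal observables R^{jc}_{ib} of the honest strategy. -/
def honestR (n : ℕ) (i : Fin n) (b : Bool) (j : Fin n) (c : Bool) :
    Matrix ((Fin n → Fin 2)) ((Fin n → Fin 2)) ℂ :=
  if i < j then ∑ x : Bool, ∑ y : Bool, sgn x • honestPi n i j b c x y
  else ∑ x : Bool, ∑ y : Bool, sgn y • honestPi n j i c b x y

lemma onQubit_one {K : Type*} [Fintype K] [DecidableEq K] (k : K) :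
    onQubit k (1 : Matrix (Fin 2) (Fin 2) ℂ) = 1 := by
  ext f g
  by_cases h : ∀ k', k' ≠ k → f k' = g k'
  · by_cases hk : f k = g k
    · have : f = g := funext fun k' => by by_cases hk' : k' = k <;> simp_all
      simp [onQubit, h, hk, this, Matrix.one_apply]
    · have : f ≠ g := fun he => hk (by rw [he])
      simp [onQubit, h, hk, Matrix.one_apply, this]
  · have : f ≠ g := fun he => h (fun k' _ => by rw [he])
    simp [onQubit, h, Matrix.one_apply, this]

lemma onQubit_add {K : Type*} [Fintype K] [DecidableEq K] (k : K)
    (A B : Matrix (Fin 2) (Fin 2) ℂ) :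
    onQubit k (A + B) = onQubit k A + onQubit k B := by
  ext f g
  simp only [onQubit, Matrix.add_apply]
  split <;> simp

lemma onQubit_smul {K : Type*} [Fintype K] [DecidableEq K] (k : K) (c : ℂ)
    (A : Matrix (Fin 2) (Fin 2) ℂ) :
    onQubit k (c • A) = c • onQubit k A := by
  ext f g
  simp only [onQubit, Matrix.smul_apply]
  split <;> simp

lemma eigProj_sum (M : Matrix (Fin 2) (Fin 2) ℂ) :
    (∑ x : Bool, eigProj x M) = 1 := by
  simp only [Fintype.sum_bool, eigProj, sgn]
  ext a b
  by_cases hab : a = b <;> simp [Matrix.add_apply, Matrix.smul_apply, Matrix.one_apply, hab] <;> ring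

lemma eigProj_signed_sum (M : Matrix (Fin 2) (Fin 2) ℂ) :
    (∑ x : Bool, sgn x • eigProj x M) = M := by
  simp only [Fintype.sum_bool, eigProj, sgn]
  ext a b
  by_cases hab : a = b <;> simp [Matrix.add_apply, Matrix.smul_apply, Matrix.one_apply, hab] <;> ring
lemma onQubit_sub {K : Type*} [Fintype K] [DecidableEq K] (k : K)
    (A B : Matrix (Fin 2) (Fin 2) ℂ) :
    onQubit k (A - B) = onQubit k A - onQubit k B := by
  ext f g
  simp only [onQubit, Matrix.sub_apply]
  split <;> simp

lemma honestR_eq (n : ℕ) (i : Fin n) (b : Bool) (j : Fin n) (c : Bool) :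
    honestR n i b j c = onQubit i (Mb b) := by
  have hsum : ∀ M : Matrix (Fin 2) (Fin 2) ℂ, eigProj true M + eigProj false M = 1 := by
    intro M; simpa [Fintype.sum_bool] using eigProj_sum M
  have hsgn : ∀ M : Matrix (Fin 2) (Fin 2) ℂ, eigProj true M - eigProj false M = M := by
    intro M
    have := eigProj_signed_sum M
    simp only [Fintype.sum_bool, sgn, if_true, if_false, one_smul, neg_smul, neg_one_smul] at this
    simpa [sub_eq_add_neg] using this
  have s1 : sgn true = 1 := rfl
  have s2 : sgn false = -1 := rfl
  unfold honestR honestPi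
  split
  · rw [Fintype.sum_bool]
    simp only [Fintype.sum_bool, s1, s2, one_smul, neg_one_smul]
    have : (onQubit i (eigProj true (Mb b)) * onQubit j (eigProj true (Mb c)) +
        onQubit i (eigProj true (Mb b)) * onQubit j (eigProj false (Mb c))) +
        (-(onQubit i (eigProj false (Mb b)) * onQubit j (eigProj true (Mb c))) +
        -(onQubit i (eigProj false (Mb b)) * onQubit j (eigProj false (Mb c)))) =
        (onQubit i (eigProj true (Mb b)) - onQubit i (eigProj false (Mb b))) *
        (onQubit j (eigProj true (Mb c)) + onQubit j (eigProj false (Mb c))) := by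
      noncomm_ring
    rw [this, ← onQubit_sub, ← onQubit_add, hsum, hsgn, onQubit_one, mul_one]
  · rw [Fintype.sum_bool]
    simp only [Fintype.sum_bool, s1, s2, one_smul, neg_one_smul]
    have : (onQubit j (eigProj true (Mb c)) * onQubit i (eigProj true (Mb b)) +
        -(onQubit j (eigProj true (Mb c)) * onQubit i (eigProj false (Mb b)))) +
        (onQubit j (eigProj false (Mb c)) * onQubit i (eigProj true (Mb b)) +
        -(onQubit j (eigProj false (Mb c)) * onQubit i (eigProj false (Mb b)))) =
        (onQubit j (eigProj true (Mb c)) + onQubit j (eigProj false (Mb c))) *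
        (onQubit i (eigProj true (Mb b)) - onQubit i (eigProj false (Mb b))) := by
      noncomm_ring
    rw [this, ← onQubit_sub, ← onQubit_add, hsum, hsgn, onQubit_one, one_mul]
lemma conj_eprAmp (a b : Fin 2) : (starRingEnd ℂ) (eprAmp a b) = eprAmp a b := by
  unfold eprAmp; split <;> simp

lemma onQubit_apply_eq_prod {n : ℕ} (i : Fin n) (P : Matrix (Fin 2) (Fin 2) ℂ)
    (f g : Fin n → Fin 2) :
    onQubit i P f g = ∏ j, (if j = i then P else 1) (f j) (g j) := by
  by_cases h : ∀ k', k' ≠ i → f k' = g k'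
  · rw [onQubit, if_pos h,
      Finset.prod_eq_single i (fun j _ hj => by simp [hj, Matrix.one_apply, h j hj])
        (by simp)]
    simp
  · push_neg at h
    obtain ⟨k, hk, hfk⟩ := h
    rw [onQubit, if_neg (by push_neg; exact ⟨k, hk, hfk⟩)]
    symm
    apply Finset.prod_eq_zero (Finset.mem_univ k)
    simp [hk, Matrix.one_apply, hfk]

def Tfac {n : ℕ} (i : Fin n) (P Q : Matrix (Fin 2) (Fin 2) ℂ) (j : Fin n)
    (v : (Fin 2 × Fin 2) × (Fin 2 × Fin 2)) : ℂ :=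
  eprAmp v.1.1 v.1.2 * ((if j = i then P else 1) v.1.1 v.2.1 *
    (if j = i then Q else 1) v.1.2 v.2.2 * eprAmp v.2.1 v.2.2)

lemma sqrt2_inv_sq : ((Real.sqrt 2 : ℝ) : ℂ)⁻¹ * ((Real.sqrt 2 : ℝ) : ℂ)⁻¹ = 1 / 2 := by
  rw [← mul_inv]
  norm_cast
  rw [Real.mul_self_sqrt (by norm_num)]
  norm_num

lemma Tfac_sum_ne {n : ℕ} (i : Fin n) (P Q : Matrix (Fin 2) (Fin 2) ℂ) (j : Fin n)
    (hj : j ≠ i) : (∑ v : (Fin 2 × Fin 2) × (Fin 2 × Fin 2), Tfac i P Q j v) = 1 := by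
  simp only [Tfac, if_neg hj]
  simp [Fintype.sum_prod_type, Fin.sum_univ_two, eprAmp, Matrix.one_apply]
  linear_combination 2 * sqrt2_inv_sq

lemma Tfac_sum_eq {n : ℕ} (i : Fin n) (P Q : Matrix (Fin 2) (Fin 2) ℂ) :
    (∑ v : (Fin 2 × Fin 2) × (Fin 2 × Fin 2), Tfac i P Q i v) =
      (1 / 2 : ℂ) * ∑ a : Fin 2, ∑ b : Fin 2, P a b * Q a b := by
  simp only [Tfac, if_pos rfl]
  simp [Fintype.sum_prod_type, Fin.sum_univ_two, eprAmp]
  linear_combination (P 0 0 * Q 0 0 + P 0 1 * Q 0 1 + P 1 0 * Q 1 0 + P 1 1 * Q 1 1) *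
    sqrt2_inv_sq
set_option maxHeartbeats 1000000 in
lemma cinner_onQubit (n : ℕ) (i : Fin n) (P Q : Matrix (Fin 2) (Fin 2) ℂ) :
    cinner (honestPsi n) (((onQubit i P) ⊗ₖ (onQubit i Q)).mulVec (honestPsi n)) =
      (1 / 2 : ℂ) * ∑ a : Fin 2, ∑ b : Fin 2, P a b * Q a b := by
  classical
  have key : ∀ p q : (Fin n → Fin 2) × (Fin n → Fin 2),
      (starRingEnd ℂ) (honestPsi n p) *
        (((onQubit i P) ⊗ₖ (onQubit i Q)) p q * honestPsi n q) =
      ∏ j, Tfac i P Q j ((p.1 j, p.2 j), (q.1 j, q.2 j)) := by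
    intro p q
    rw [Matrix.kroneckerMap_apply, honestPsi, honestPsi, map_prod]
    simp only [conj_eprAmp]
    rw [onQubit_apply_eq_prod, onQubit_apply_eq_prod,
      ← Finset.prod_mul_distrib, ← Finset.prod_mul_distrib, ← Finset.prod_mul_distrib]
    exact Finset.prod_congr rfl fun j _ => by rw [Tfac]
  calc cinner (honestPsi n) (((onQubit i P) ⊗ₖ (onQubit i Q)).mulVec (honestPsi n))
      = ∑ p : (Fin n → Fin 2) × (Fin n → Fin 2), ∑ q : (Fin n → Fin 2) × (Fin n → Fin 2),
          ∏ j, Tfac i P Q j ((p.1 j, p.2 j), (q.1 j, q.2 j)) := by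
        rw [cinner]
        refine Finset.sum_congr rfl fun p _ => ?_
        rw [Matrix.mulVec, dotProduct, Finset.mul_sum]
        exact Finset.sum_congr rfl fun q _ => key p q
    _ = ∑ x : ((Fin n → Fin 2) × (Fin n → Fin 2)) × ((Fin n → Fin 2) × (Fin n → Fin 2)),
          ∏ j, Tfac i P Q j ((x.1.1 j, x.1.2 j), (x.2.1 j, x.2.2 j)) := by
        rw [← Fintype.sum_prod_type']
    _ = ∑ F : Fin n → (Fin 2 × Fin 2) × (Fin 2 × Fin 2), ∏ j, Tfac i P Q j (F j) :=
        (Fintype.sum_equiv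
          (⟨fun F => ((fun j => (F j).1.1, fun j => (F j).1.2),
              (fun j => (F j).2.1, fun j => (F j).2.2)),
            fun x j => ((x.1.1 j, x.1.2 j), (x.2.1 j, x.2.2 j)),
            fun F => rfl, fun x => rfl⟩ :
            (Fin n → (Fin 2 × Fin 2) × (Fin 2 × Fin 2)) ≃
              ((Fin n → Fin 2) × (Fin n → Fin 2)) × ((Fin n → Fin 2) × (Fin n → Fin 2)))
          (fun F => ∏ j, Tfac i P Q j (F j))
          (fun x => ∏ j, Tfac i P Q j ((x.1.1 j, x.1.2 j), (x.2.1 j, x.2.2 j)))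
          (fun F => rfl)).symm
    _ = ∏ j, ∑ v : (Fin 2 × Fin 2) × (Fin 2 × Fin 2), Tfac i P Q j v := by
        rw [← Fintype.piFinset_univ, ← Finset.prod_univ_sum]
    _ = (∑ v : (Fin 2 × Fin 2) × (Fin 2 × Fin 2), Tfac i P Q i v) *
          ∏ j ∈ Finset.univ.erase i, ∑ v : (Fin 2 × Fin 2) × (Fin 2 × Fin 2), Tfac i P Q j v :=
        (Finset.mul_prod_erase _ _ (Finset.mem_univ i)).symm
    _ = (1 / 2 : ℂ) * ∑ a : Fin 2, ∑ b : Fin 2, P a b * Q a b := by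
        rw [Tfac_sum_eq,
          Finset.prod_eq_one fun j hj => Tfac_sum_ne i P Q j (Finset.ne_of_mem_erase hj),
          mul_one]
lemma Mb_true_eq : Mb true = ((Real.sqrt 2 : ℝ) : ℂ)⁻¹ • !![1, -1; -1, -1] := by
  ext a b
  fin_cases a <;> fin_cases b <;>
    simp [Mb, Had, sx, Matrix.mul_apply, Fin.sum_univ_two] <;> ring

lemma Mb_false_eq : Mb false = ((Real.sqrt 2 : ℝ) : ℂ)⁻¹ • !![1, 1; 1, -1] := rfl

lemma cin_zz (n : ℕ) (i : Fin n) :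
    cinner (honestPsi n) ((onQubit i sz ⊗ₖ onQubit i sz).mulVec (honestPsi n)) = 1 := by
  rw [cinner_onQubit]
  norm_num [sz, Fin.sum_univ_two]

lemma cin_xx (n : ℕ) (i : Fin n) :
    cinner (honestPsi n) ((onQubit i sx ⊗ₖ onQubit i sx).mulVec (honestPsi n)) = 1 := by
  rw [cinner_onQubit]
  norm_num [sx, Fin.sum_univ_two]

lemma cin_zf (n : ℕ) (i : Fin n) :
    cinner (honestPsi n) ((onQubit i sz ⊗ₖ onQubit i (Mb false)).mulVec (honestPsi n)) =
      (((Real.sqrt 2)⁻¹ : ℝ) : ℂ) := by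
  rw [cinner_onQubit]
  simp [sz, Mb_false_eq, Fin.sum_univ_two, Matrix.smul_apply]
  push_cast
  ring

lemma cin_zt (n : ℕ) (i : Fin n) :
    cinner (honestPsi n) ((onQubit i sz ⊗ₖ onQubit i (Mb true)).mulVec (honestPsi n)) =
      (((Real.sqrt 2)⁻¹ : ℝ) : ℂ) := by
  rw [cinner_onQubit]
  simp [sz, Mb_true_eq, Fin.sum_univ_two, Matrix.smul_apply]
  push_cast
  ring

lemma cin_xf (n : ℕ) (i : Fin n) :
    cinner (honestPsi n) ((onQubit i sx ⊗ₖ onQubit i (Mb false)).mulVec (honestPsi n)) =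
      (((Real.sqrt 2)⁻¹ : ℝ) : ℂ) := by
  rw [cinner_onQubit]
  simp [sx, Mb_false_eq, Fin.sum_univ_two, Matrix.smul_apply]
  push_cast
  ring

lemma cin_xt (n : ℕ) (i : Fin n) :
    cinner (honestPsi n) ((onQubit i sx ⊗ₖ onQubit i (Mb true)).mulVec (honestPsi n)) =
      ((-(Real.sqrt 2)⁻¹ : ℝ) : ℂ) := by
  rw [cinner_onQubit]
  simp [sx, Mb_true_eq, Fin.sum_univ_two, Matrix.smul_apply]
  push_cast
  ring

lemma cinner_onQubit_comm (n : ℕ) (i : Fin n) (P Q : Matrix (Fin 2) (Fin 2) ℂ) :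
    cinner (honestPsi n) ((onQubit i P ⊗ₖ onQubit i Q).mulVec (honestPsi n)) =
      cinner (honestPsi n) ((onQubit i Q ⊗ₖ onQubit i P).mulVec (honestPsi n)) := by
  rw [cinner_onQubit, cinner_onQubit]
  simp [mul_comm]
lemma cin_fz (n : ℕ) (i : Fin n) :
    cinner (honestPsi n) ((onQubit i (Mb false) ⊗ₖ onQubit i sz).mulVec (honestPsi n)) =
      (((Real.sqrt 2)⁻¹ : ℝ) : ℂ) := by rw [cinner_onQubit_comm]; exact cin_zf n i

lemma cin_tz (n : ℕ) (i : Fin n) :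
    cinner (honestPsi n) ((onQubit i (Mb true) ⊗ₖ onQubit i sz).mulVec (honestPsi n)) =
      (((Real.sqrt 2)⁻¹ : ℝ) : ℂ) := by rw [cinner_onQubit_comm]; exact cin_zt n i

lemma cin_fx (n : ℕ) (i : Fin n) :
    cinner (honestPsi n) ((onQubit i (Mb false) ⊗ₖ onQubit i sx).mulVec (honestPsi n)) =
      (((Real.sqrt 2)⁻¹ : ℝ) : ℂ) := by rw [cinner_onQubit_comm]; exact cin_xf n i

lemma cin_tx (n : ℕ) (i : Fin n) :
    cinner (honestPsi n) ((onQubit i (Mb true) ⊗ₖ onQubit i sx).mulVec (honestPsi n)) =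
      ((-(Real.sqrt 2)⁻¹ : ℝ) : ℂ) := by rw [cinner_onQubit_comm]; exact cin_xt n i
lemma count_offdiag (n : ℕ) (C : ℝ) :
    (∑ i : Fin n, ∑ j : Fin n, if i = j then 0 else C) = n * (n - 1) * C := by
  have h1 : ∀ i : Fin n, (∑ j : Fin n, if i = j then (0:ℝ) else C) = n * C - C := by
    intro i
    calc (∑ j : Fin n, if i = j then (0:ℝ) else C)
        = ∑ j : Fin n, (C - if i = j then C else 0) :=
          Finset.sum_congr rfl fun j _ => by split <;> ring
      _ = (∑ _j : Fin n, C) - ∑ j : Fin n, (if i = j then C else 0) :=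
          Finset.sum_sub_distrib _ _
      _ = n * C - C := by
          rw [Finset.sum_const, Finset.sum_ite_eq]
          simp [Finset.card_univ, mul_comm]
  rw [Finset.sum_congr rfl fun i _ => h1 i, Finset.sum_const]
  simp only [Finset.card_univ, Fintype.card_fin, nsmul_eq_mul]
  ring

lemma two_cos_sq : 2 * Real.cos (Real.pi / 8) ^ 2 = 1 + (Real.sqrt 2)⁻¹ := by
  have hsq : Real.cos (Real.pi / 8) ^ 2 = 1 / 2 + Real.cos (2 * (Real.pi / 8)) / 2 :=
    Real.cos_sq _
  rw [hsq, show 2 * (Real.pi / 8) = Real.pi / 4 by ring, Real.cos_pi_div_four]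
  have h2 : Real.sqrt 2 * Real.sqrt 2 = 2 := Real.mul_self_sqrt (by norm_num)
  have hs : Real.sqrt 2 ≠ 0 := by positivity
  field_simp
  linarith [h2]

theorem stmt_10' (n : ℕ) (hn : 2 ≤ n) :
    RChar (honestPi n) (honestR n) ∧
    accProb n (fun i => onQubit i sx) (fun i => onQubit i sz)
      (fun i => onQubit i sx) (fun i => onQubit i sz)
      (honestR n) (honestR n) (honestPsi n) = omegaOpt := by
  have h2' : Real.sqrt 2 * Real.sqrt 2 = 2 := Real.mul_self_sqrt (by norm_num)
  have hs' : Real.sqrt 2 ≠ 0 := by positivity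
  constructor
  · intro i j hij b c
    refine ⟨by simp [honestR, hij], ?_⟩
    have h2 : ¬ j < i := not_lt.mpr hij.le
    simp [honestR, h2]
  · have hr : ∀ (i j : Fin n) (b c : Bool), honestR n i b j c = onQubit i (Mb b) :=
      fun i j b c => honestR_eq n i b j c
    have E1 : ∀ i : Fin n, (∑ a : Bool,
        (1 + (cinner (honestPsi n)
          (((if a then onQubit i sx else onQubit i sz) ⊗ₖ
            (if a then onQubit i sx else onQubit i sz)).mulVec (honestPsi n))).re) / 2) = 2 := by
      intro i
      rw [Fintype.sum_bool]
      simp [cin_zz, cin_xx]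
      norm_num
    have E2 : ∀ i j : Fin n, (if i = j then (0:ℝ) else ∑ a : Bool, ∑ b : Bool, ∑ c : Bool,
        (1 + (if a && b then (-1:ℝ) else 1) *
          (cinner (honestPsi n)
            (((if a then onQubit i sx else onQubit i sz) ⊗ₖ honestR n i b j c).mulVec
              (honestPsi n))).re) / 2) =
        (if i = j then (0:ℝ) else 4 * (1 + (Real.sqrt 2)⁻¹)) := by
      intro i j
      by_cases h : i = j
      · simp [h]
      · rw [if_neg h, if_neg h]
        simp only [hr, Fintype.sum_bool]
        simp [cin_zf, cin_zt, cin_xf, cin_xt]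
        field_simp
        linarith [h2']
    have E3 : ∀ i j : Fin n, (if i = j then (0:ℝ) else ∑ a : Bool, ∑ b : Bool, ∑ c : Bool,
        (1 + (if a && b then (-1:ℝ) else 1) *
          (cinner (honestPsi n)
            ((honestR n i b j c ⊗ₖ (if a then onQubit i sx else onQubit i sz)).mulVec
              (honestPsi n))).re) / 2) =
        (if i = j then (0:ℝ) else 4 * (1 + (Real.sqrt 2)⁻¹)) := by
      intro i j
      by_cases h : i = j
      · simp [h]
      · rw [if_neg h, if_neg h]
        simp only [hr, Fintype.sum_bool]
        simp [cin_fz, cin_tz, cin_fx, cin_tx]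
        field_simp
        linarith [h2']
    simp only [accProb]
    rw [Finset.sum_congr rfl fun (i : Fin n) _ => E1 i]
    rw [Finset.sum_congr rfl fun (i : Fin n) _ => Finset.sum_congr rfl
      fun (j : Fin n) _ => E2 i j]
    rw [Finset.sum_congr rfl fun (i : Fin n) _ => Finset.sum_congr rfl
      fun (j : Fin n) _ => E3 i j]
    rw [count_offdiag, Finset.sum_const]
    simp only [Finset.card_univ, Fintype.card_fin, nsmul_eq_mul]
    have hn0 : (n : ℝ) ≠ 0 := Nat.cast_ne_zero.mpr (by omega)
    have hn2 : (2 : ℝ) ≤ (n : ℝ) := by exact_mod_cast hn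
    have hn1 : (n : ℝ) - 1 ≠ 0 := by intro h; linarith [h]
    rw [omegaOpt, two_cos_sq]
    field_simp
    ring
/-- completeness — the honest strategy passes with probability ω_opt. -/
theorem stmt_10 (n : ℕ) (hn : 2 ≤ n) :
    RChar (honestPi n) (honestR n) ∧
    accProb n (fun i => onQubit i sx) (fun i => onQubit i sz)
      (fun i => onQubit i sx) (fun i => onQubit i sz)
      (honestR n) (honestR n) (honestPsi n) = omegaOpt := by
  exact stmt_10' n hn

end
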